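/- The least-squares minimization problem: find σ ∈ H_{g,-}(div;Ω) minimizing J₂(τ;f,g) = ‖γτ + β(∇·τ - f)‖₀² has a unique solution with minimum value zero, given by σ = βu where u solves the transport equation. -/

import Mathlib

open MeasureTheory Real RealInnerProductSpace ENNReal

/-- The second least-squares functional `J₂(τ; f, g) = ‖γτ + β(∇·τ - f)‖₀²`,
acting on pairs `p = (τ, ∇·τ)`. -/
noncomputable def lsJ2 {α : Type*} [MeasurableSpace α] {d : ℕ}
    (μ : Measure α) (β : α → EuclideanSpace ℝ (Fin d)) (γ : α → ℝ) (f : α → ℝ)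
    (p : (α → EuclideanSpace ℝ (Fin d)) × (α → ℝ)) : ℝ≥0∞ :=
  eLpNorm (fun x => γ x • p.1 x + (p.2 x - f x) • β x) 2 μ ^ 2

/-- the least-squares problem `min J₂(τ; f, g)` over `H_{g,-}(div;Ω)`
(modelled as a set `Vg` of pairs `(τ, ∇·τ)`) has a unique solution, the minimum value
is zero, and the minimizer is `σ = βu`, where `u` solves the transport equation
`∇·(βu) + γu = f`, `u = g` on `Γ₋` (encoded by `(βu, f - γu) ∈ Vg`); here `γ ≠ 0` a.e. -/
theorem stmt_6 {α : Type*} [MeasurableSpace α] {d : ℕ}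
    (μ : Measure α) (β : α → EuclideanSpace ℝ (Fin d)) (γ : α → ℝ) (f : α → ℝ)
    (hmβ : Measurable β) (hmγ : Measurable γ)
    (hγ : ∀ᵐ x ∂μ, γ x ≠ 0)
    -- Vg models H_{g,-}(div;Ω), V0 models H_{0,-}(div;Ω)
    (Vg V0 : Set ((α → EuclideanSpace ℝ (Fin d)) × (α → ℝ)))
    (hVgmeas : ∀ p ∈ Vg, AEStronglyMeasurable p.1 μ ∧ AEStronglyMeasurable p.2 μ)
    (hdiff : ∀ p ∈ Vg, ∀ q ∈ Vg, (p.1 - q.1, p.2 - q.2) ∈ V0)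
    -- uniqueness for the homogeneous transport problem with zero inflow data
    (huniq : ∀ v : α → ℝ, ∀ p ∈ V0, (p.1 =ᵐ[μ] fun x => v x • β x) →
      ((fun x => p.2 x + γ x * v x) =ᵐ[μ] 0) → v =ᵐ[μ] 0)
    -- u ∈ W solves the transport equation with inflow data g
    (u : α → ℝ) (hu : AEStronglyMeasurable u μ)
    (hsol : ((fun x => u x • β x), (fun x => f x - γ x * u x)) ∈ Vg) :
    lsJ2 μ β γ f ((fun x => u x • β x), (fun x => f x - γ x * u x)) = 0 ∧
    (∀ p ∈ Vg,
      lsJ2 μ β γ f ((fun x => u x • β x), (fun x => f x - γ x * u x)) ≤ lsJ2 μ β γ f p) ∧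
    (∀ p ∈ Vg, (∀ q ∈ Vg, lsJ2 μ β γ f p ≤ lsJ2 μ β γ f q) →
      p.1 =ᵐ[μ] (fun x => u x • β x) ∧ p.2 =ᵐ[μ] (fun x => f x - γ x * u x)) := by

  have hzero : lsJ2 μ β γ f ((fun x => u x • β x), (fun x => f x - γ x * u x)) = 0 := by
    have hfun : (fun x => γ x • (u x • β x) + ((f x - γ x * u x) - f x) • β x)
        = fun _ => (0 : EuclideanSpace ℝ (Fin d)) := by
      funext x
      rw [smul_smul, ← add_smul]
      have : γ x * u x + (f x - γ x * u x - f x) = 0 := by ring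
      rw [this, zero_smul]
    simp only [lsJ2]
    rw [hfun]
    simp
  refine ⟨hzero, fun p _ => by rw [hzero]; exact zero_le, ?_⟩
  intro p hp hmin
  -- f is a.e. strongly measurable
  have hfm : AEStronglyMeasurable f μ := by
    have h1 := (hVgmeas _ hsol).2
    have h2 : AEStronglyMeasurable (fun x => γ x * u x) μ :=
      hmγ.aestronglyMeasurable.mul hu
    exact (h1.add h2).congr (Filter.Eventually.of_forall fun x => by
      show f x - γ x * u x + γ x * u x = f x
      ring)
  have hFm : AEStronglyMeasurable (fun x => γ x • p.1 x + (p.2 x - f x) • β x) μ :=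
    (hmγ.aestronglyMeasurable.smul (hVgmeas p hp).1).add
      (((hVgmeas p hp).2.sub hfm).smul hmβ.aestronglyMeasurable)
  have hJ0 : lsJ2 μ β γ f p = 0 := le_antisymm (hzero ▸ hmin _ hsol) zero_le
  have hN0 : eLpNorm (fun x => γ x • p.1 x + (p.2 x - f x) • β x) 2 μ = 0 := by
    have := hJ0
    simp only [lsJ2, pow_eq_zero_iff (two_ne_zero)] at this
    exact this
  have hF0 : (fun x => γ x • p.1 x + (p.2 x - f x) • β x) =ᵐ[μ] 0 :=
    (eLpNorm_eq_zero_iff hFm (by norm_num)).mp hN0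
  set v : α → ℝ := fun x => (f x - γ x * u x - p.2 x) / γ x with hv
  have hq := hdiff p hp _ hsol
  have hq1 : (p.1 - fun x => u x • β x) =ᵐ[μ] fun x => v x • β x := by
    filter_upwards [hF0, hγ] with x hx hγx
    have hx' : γ x • p.1 x = (f x - p.2 x) • β x := by
      have : γ x • p.1 x + (p.2 x - f x) • β x = 0 := hx
      have := eq_neg_of_add_eq_zero_left this
      rw [this, ← neg_smul]; ring_nf
    have hp1 : p.1 x = ((f x - p.2 x) / γ x) • β x := by
      have := congrArg (fun y => (γ x)⁻¹ • y) hx'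
      simpa [smul_smul, inv_mul_cancel₀ hγx, div_eq_inv_mul, mul_comm] using this
    show p.1 x - u x • β x = v x • β x
    rw [hp1, ← sub_smul, hv]
    congr 1
    field_simp
    ring
  have hq2 : (fun x => (p.2 - fun x => f x - γ x * u x) x + γ x * v x) =ᵐ[μ] 0 := by
    filter_upwards [hγ] with x hγx
    show p.2 x - (f x - γ x * u x) + γ x * v x = 0
    rw [hv]
    field_simp
    ring
  have hv0 : v =ᵐ[μ] 0 := huniq v _ hq hq1 hq2
  have hp2 : p.2 =ᵐ[μ] fun x => f x - γ x * u x := by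
    filter_upwards [hv0, hγ] with x hx hγx
    have : (f x - γ x * u x - p.2 x) / γ x = 0 := hx
    have := (div_eq_zero_iff.mp this).resolve_right hγx
    linarith
  refine ⟨?_, hp2⟩
  filter_upwards [hF0, hγ, hp2] with x hx hγx hx2
  have hx' : γ x • p.1 x = (f x - p.2 x) • β x := by
    have := eq_neg_of_add_eq_zero_left hx
    rw [this, ← neg_smul]; ring_nf
  have : γ x • p.1 x = γ x • (u x • β x) := by
    rw [hx', hx2, smul_smul]
    congr 1
    ring
  exact smul_right_injective _ hγx this
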